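/- There exist n = 3 quadratic functions h_i(x) = (1/2) xᵀ A_i x on ℝ² with averaged first-order Hessian dissimilarity constant (1/3)Σ_i ‖∇h_i(x) − ∇h_i(y)‖² = (14/3)‖x−y‖² for all x,y, while (1/3)Σ_i ‖∇²h_i(x)‖² = 19/3 > 14/3 for all x; i.e., the first-order averaged Hessian dissimilarity bound can be strictly smaller than the second-order one. -/

import Mathlib

open scoped BigOperators

noncomputable section StmtAux

abbrev E2 := EuclideanSpace ℝ (Fin 2)

def cc : Fin 3 → Fin 2 → ℝ := ![![3, 2], ![-1, 1], ![-2, -3]]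

def Lmap (i : Fin 3) : E2 →ₗ[ℝ] E2 where
  toFun x := WithLp.toLp 2 (fun j => cc i j * x j)
  map_add' x y := by ext j; simp [mul_add]
  map_smul' t x := by ext j; simp [smul_eq_mul]; ring

def L (i : Fin 3) : E2 →L[ℝ] E2 := LinearMap.toContinuousLinearMap (Lmap i)

lemma Lap (i : Fin 3) (x : E2) (j : Fin 2) : L i x j = cc i j * x j := rfl

def hfun (i : Fin 3) (x : E2) : ℝ := (1/2 : ℝ) * ∑ j, cc i j * (x j)^2

lemma hfun_eq (i : Fin 3) : hfun i = fun y : E2 => ∑ j, ((1/2 : ℝ) * cc i j) * (y j * y j) := by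
  funext y
  simp only [hfun, Finset.mul_sum, sq]
  refine Finset.sum_congr rfl fun j _ => by ring

lemma hasFDerivAt_hfun (i : Fin 3) (x : E2) :
    HasFDerivAt (hfun i) (∑ j, (cc i j * x j) • EuclideanSpace.proj (𝕜 := ℝ) j) x := by
  rw [hfun_eq]
  apply HasFDerivAt.fun_sum
  intro j _
  have hp := (EuclideanSpace.proj (𝕜 := ℝ) (ι := Fin 2) j).hasFDerivAt (x := x)
  have hm := (hp.mul hp).const_mul ((1/2 : ℝ) * cc i j)
  refine (hm.congr_fderiv ?_).congr_of_eventuallyEq (Filter.Eventually.of_forall fun y => ?_)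
  swap
  · simp only [Pi.mul_apply, PiLp.proj_apply]
  ext v
  simp only [ContinuousLinearMap.coe_smul', Pi.smul_apply, ContinuousLinearMap.add_apply,
    smul_eq_mul, PiLp.proj_apply]
  ring

lemma toDual_L (i : Fin 3) (x : E2) :
    (InnerProductSpace.toDual ℝ E2) (L i x) =
      ∑ j, (cc i j * x j) • EuclideanSpace.proj (𝕜 := ℝ) j := by
  ext v
  simp only [InnerProductSpace.toDual_apply_apply, PiLp.inner_apply, RCLike.inner_apply,
    ContinuousLinearMap.coe_sum', Finset.sum_apply, ContinuousLinearMap.coe_smul',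
    Pi.smul_apply, smul_eq_mul, Lap, starRingEnd_apply, star_trivial]
  refine Finset.sum_congr rfl fun j _ => ?_
  simp only [PiLp.proj_apply]; ring

lemma hasGradientAt_hfun (i : Fin 3) (x : E2) : HasGradientAt (hfun i) (L i x) x := by
  rw [hasGradientAt_iff_hasFDerivAt, toDual_L]
  exact hasFDerivAt_hfun i x

lemma gradient_hfun (i : Fin 3) : gradient (hfun i) = fun x => L i x := by
  funext x
  exact (hasGradientAt_hfun i x).gradient

lemma norm_sq_E2 (z : E2) : ‖z‖ ^ 2 = (z 0)^2 + (z 1)^2 := by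
  rw [PiLp.norm_sq_eq_of_L2]
  simp [Fin.sum_univ_two, sq_abs]

lemma contDiff_hfun (i : Fin 3) : ContDiff ℝ 2 (hfun i) := by
  rw [hfun_eq]
  apply ContDiff.sum
  intro j _
  have hp := (EuclideanSpace.proj (𝕜 := ℝ) (ι := Fin 2) j).contDiff (n := 2)
  exact contDiff_const.mul (hp.mul hp)

lemma norm_L (i : Fin 3) : ‖L i‖ = max |cc i 0| |cc i 1| := by
  have hM : (0:ℝ) ≤ max |cc i 0| |cc i 1| := le_max_of_le_left (abs_nonneg _)
  refine le_antisymm ?_ ?_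
  · apply ContinuousLinearMap.opNorm_le_bound _ hM
    intro z
    have h2 : ‖L i z‖ ^ 2 ≤ (max |cc i 0| |cc i 1|) ^ 2 * ‖z‖ ^ 2 := by
      rw [norm_sq_E2, norm_sq_E2 z, Lap, Lap, mul_pow, mul_pow, mul_add]
      have h0 : (cc i 0)^2 ≤ (max |cc i 0| |cc i 1|)^2 := by
        rw [← sq_abs]; exact pow_le_pow_left₀ (abs_nonneg _) (le_max_left _ _) 2
      have h1 : (cc i 1)^2 ≤ (max |cc i 0| |cc i 1|)^2 := by
        rw [← sq_abs]; exact pow_le_pow_left₀ (abs_nonneg _) (le_max_right _ _) 2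
      gcongr
    have hb : (0:ℝ) ≤ (max |cc i 0| |cc i 1|) * ‖z‖ := mul_nonneg hM (norm_nonneg z)
    nlinarith [norm_nonneg ((L i) z)]
  · have key : ∀ j : Fin 2, |cc i j| ≤ ‖L i‖ := by
      intro j
      have h := (L i).le_opNorm (EuclideanSpace.single j (1:ℝ))
      have he : L i (EuclideanSpace.single j (1:ℝ)) = EuclideanSpace.single j (cc i j) := by
        ext k
        by_cases hk : k = j <;> simp [Lap, EuclideanSpace.single_apply, hk]
      rw [he, EuclideanSpace.norm_single, EuclideanSpace.norm_single] at h
      simpa using h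
    exact max_le (key 0) (key 1)

end StmtAux

theorem stmt_5 :
    ∃ h : Fin 3 → EuclideanSpace ℝ (Fin 2) → ℝ,
      (∀ i, ContDiff ℝ 2 (h i)) ∧
      (∀ x y, (1 / 3 : ℝ) * ∑ i, ‖gradient (h i) x - gradient (h i) y‖ ^ 2 =
        14 / 3 * ‖x - y‖ ^ 2) ∧
      (∀ x, (1 / 3 : ℝ) * ∑ i, ‖fderiv ℝ (gradient (h i)) x‖ ^ 2 = 19 / 3) ∧
      (14 / 3 : ℝ) < 19 / 3 := by
  refine ⟨hfun, contDiff_hfun, ?_, ?_, by norm_num⟩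
  · intro x y
    have key : ∀ i, ‖gradient (hfun i) x - gradient (hfun i) y‖ ^ 2 =
        (cc i 0)^2 * (x 0 - y 0)^2 + (cc i 1)^2 * (x 1 - y 1)^2 := by
      intro i
      rw [gradient_hfun]
      have : L i x - L i y = L i (x - y) := (map_sub (L i) x y).symm
      rw [this, norm_sq_E2, Lap, Lap]
      have h0 : (x - y) 0 = x 0 - y 0 := rfl
      have h1 : (x - y) 1 = x 1 - y 1 := rfl
      rw [h0, h1]; ring
    simp only [key, Fin.sum_univ_three]
    rw [norm_sq_E2 (x - y)]
    have h0 : (x - y) 0 = x 0 - y 0 := rfl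
    have h1 : (x - y) 1 = x 1 - y 1 := rfl
    rw [h0, h1]
    simp [cc]; ring
  · intro x
    have key : ∀ i, fderiv ℝ (gradient (hfun i)) x = L i := by
      intro i
      rw [gradient_hfun]
      exact (L i).fderiv
    simp only [key, Fin.sum_univ_three, norm_L]
    norm_num [cc, Matrix.cons_val_two, Matrix.vecHead, Matrix.vecTail]
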